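/- Let Δ ≥ 4 and n ≥ Δ+2 be integers, and let m : {(i,j) : 1 ≤ i ≤ j ≤ Δ} → ℝ be a family of nonnegative real numbers satisfying Σ_{1≤i≤j≤Δ} (1/i + 1/j)·m_{i,j} = n and Σ_{1≤i≤j≤Δ} m_{i,j} = n−1. Then Σ_{1≤i≤j≤Δ} (i−j)²·m_{i,j} ≤ (4Δ−6)·n + (Δ²−6Δ+3+6/Δ)·(n−1). -/
import Mathlib


open Finset

lemma key_pointwise (Δ i j : ℕ) (hΔ : 4 ≤ Δ) (h1 : 1 ≤ i) (hij : i ≤ j) (hjΔ : j ≤ Δ) :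
    ((i : ℝ) - (j : ℝ)) ^ 2
      ≤ (4 * (Δ : ℝ) - 6) * (1 / (i : ℝ) + 1 / (j : ℝ))
        + ((Δ : ℝ) ^ 2 - 6 * (Δ : ℝ) + 3 + 6 / (Δ : ℝ)) := by
  have hi : (0 : ℝ) < i := by exact_mod_cast h1
  have hj : (0 : ℝ) < j := by exact_mod_cast le_trans h1 hij
  have hD : (0 : ℝ) < Δ := by positivity
  have hiD : (i : ℝ) ≤ Δ := by exact_mod_cast le_trans hij hjΔ
  have hijR : (i : ℝ) ≤ j := by exact_mod_cast hij
  have hjD : (j : ℝ) ≤ Δ := by exact_mod_cast hjΔ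
  have hDR : (4 : ℝ) ≤ Δ := by exact_mod_cast hΔ
  -- cubic factor fact
  have hcube : ((i : ℝ) - 1) * ((i : ℝ) - 2) * (2 * (Δ : ℝ) - 3 - i) ≥ 0 := by
    rcases Nat.lt_or_ge i 3 with h3 | h3
    · interval_cases i <;> norm_num <;> nlinarith
    · have : (3 : ℝ) ≤ i := by exact_mod_cast h3
      have : (i : ℝ) ≤ 2 * Δ - 3 := by nlinarith
      exact mul_nonneg (mul_nonneg (by linarith) (by linarith)) (by linarith)
  have hji : (1 / (j : ℝ)) ≥ 1 / Δ := one_div_le_one_div_of_le hj hjD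
  have hii : (i : ℝ) * (1 / i) = 1 := by field_simp
  have hDD : (Δ : ℝ) * (1 / Δ) = 1 := by field_simp
  have hD6 : (Δ : ℝ) * (6 / Δ) = 6 := by field_simp
  -- step 2: (i - Δ)^2 ≤ (4Δ-6)/i + Δ² - 6Δ + 7
  have step2 : ((i : ℝ) - Δ) ^ 2 ≤ (4 * (Δ : ℝ) - 6) * (1 / i) + (Δ : ℝ) ^ 2 - 6 * Δ + 7 := by
    have h0 : (0 : ℝ) ≤ ((i : ℝ) - 1) * ((i : ℝ) - 2) * (2 * (Δ : ℝ) - 3 - i) * (1 / i) := by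
      exact mul_nonneg hcube (by positivity)
    nlinarith [h0, hii, sq_nonneg ((i:ℝ) - Δ)]
  have step1 : ((i : ℝ) - j) ^ 2 ≤ ((i : ℝ) - Δ) ^ 2 := by nlinarith
  have h46 : (0 : ℝ) ≤ 4 * (Δ : ℝ) - 6 := by linarith
  nlinarith [mul_le_mul_of_nonneg_left hji h46, hDD, hD6]

/-- Weak LP duality bound: for nonnegative `m i j` on pairs `1 ≤ i ≤ j ≤ Δ`
satisfying the two tree constraints, the σ-objective is bounded above by
`(4Δ−6)n + (Δ²−6Δ+3+6/Δ)(n−1)`. -/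
theorem lp_upper_bound (Δ n : ℕ) (hΔ : 4 ≤ Δ) (hn : Δ + 2 ≤ n)
    (m : ℕ → ℕ → ℝ)
    (hm : ∀ i j, 1 ≤ i → i ≤ j → j ≤ Δ → 0 ≤ m i j)
    (hw : ∑ i ∈ Finset.Icc 1 Δ, ∑ j ∈ Finset.Icc i Δ,
        (1 / (i : ℝ) + 1 / (j : ℝ)) * m i j = (n : ℝ))
    (hs : ∑ i ∈ Finset.Icc 1 Δ, ∑ j ∈ Finset.Icc i Δ, m i j = (n : ℝ) - 1) :
    ∑ i ∈ Finset.Icc 1 Δ, ∑ j ∈ Finset.Icc i Δ, ((i : ℝ) - (j : ℝ)) ^ 2 * m i j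
      ≤ (4 * (Δ : ℝ) - 6) * (n : ℝ)
        + ((Δ : ℝ) ^ 2 - 6 * (Δ : ℝ) + 3 + 6 / (Δ : ℝ)) * ((n : ℝ) - 1) := by
  set A : ℝ := 4 * (Δ : ℝ) - 6 with hA
  set B : ℝ := (Δ : ℝ) ^ 2 - 6 * (Δ : ℝ) + 3 + 6 / (Δ : ℝ) with hB
  have hmain : ∑ i ∈ Finset.Icc 1 Δ, ∑ j ∈ Finset.Icc i Δ,
      ((i : ℝ) - (j : ℝ)) ^ 2 * m i j
      ≤ ∑ i ∈ Finset.Icc 1 Δ, ∑ j ∈ Finset.Icc i Δ,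
        (A * ((1 / (i : ℝ) + 1 / (j : ℝ)) * m i j) + B * m i j) := by
    apply Finset.sum_le_sum
    intro i hi
    apply Finset.sum_le_sum
    intro j hj
    simp only [Finset.mem_Icc] at hi hj
    have hmn := hm i j hi.1 hj.1 hj.2
    have hkey := key_pointwise Δ i j hΔ hi.1 hj.1 hj.2
    have := mul_le_mul_of_nonneg_right hkey hmn
    nlinarith [this]
  calc ∑ i ∈ Finset.Icc 1 Δ, ∑ j ∈ Finset.Icc i Δ, ((i : ℝ) - (j : ℝ)) ^ 2 * m i j
      ≤ ∑ i ∈ Finset.Icc 1 Δ, ∑ j ∈ Finset.Icc i Δ,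
        (A * ((1 / (i : ℝ) + 1 / (j : ℝ)) * m i j) + B * m i j) := hmain
    _ = A * ((n : ℝ)) + B * ((n : ℝ) - 1) := by
        simp only [Finset.sum_add_distrib, ← Finset.mul_sum, hw, hs]
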